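/- Let N ≥ 1, let 1 < p < 2, let ν ∈ ℝᴺ∖{0}, and let Y, M ∈ 𝕊(N) with −Y ≤ M. Then −F_p(ν, Y) ≥ |ν|^{p−2}·((p − 1)·λ_N(Y) − (N − 1)·λ_N(M)). -/

import Mathlib

open scoped RealInnerProductSpace


open Matrix

/-- The Loewner partial order on matrices: `X ≤ Y` iff `Y - X` is positive semidefinite. -/
def Loewner {n : Type*} [Fintype n] (X Y : Matrix n n ℝ) : Prop := (Y - X).PosSemidef

/-- The eigenvalues of a real symmetric matrix, listed in increasing order. -/
noncomputable def eigs {N : ℕ} (X : Matrix (Fin N) (Fin N) ℝ) : Fin N → ℝ :=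
  if h : X.IsHermitian then h.eigenvalues ∘ Tuple.sort h.eigenvalues else 0

/-- The smallest eigenvalue of a real symmetric matrix. -/
noncomputable def lam1 {N : ℕ} (X : Matrix (Fin N) (Fin N) ℝ) : ℝ := ⨅ i, eigs X i

/-- The largest eigenvalue of a real symmetric matrix. -/
noncomputable def lamN {N : ℕ} (X : Matrix (Fin N) (Fin N) ℝ) : ℝ := ⨆ i, eigs X i

/-- The p-Laplace function
`F_p(ν, X) = −|ν|^{p−2} (tr X + (p−2) ⟨Xν, ν⟩ / |ν|²)`. -/
noncomputable def Fp {N : ℕ} (p : ℝ) (ν : EuclideanSpace ℝ (Fin N))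
    (X : Matrix (Fin N) (Fin N) ℝ) : ℝ :=
  -(‖ν‖ ^ (p - 2)) * (X.trace +
    (p - 2) * (X.mulVec ((WithLp.equiv 2 (Fin N → ℝ)) ν) ⬝ᵥ (WithLp.equiv 2 (Fin N → ℝ)) ν)
      / ‖ν‖ ^ (2 : ℕ))

lemma eig_le_lamN {N : ℕ} {X : Matrix (Fin N) (Fin N) ℝ} (hX : X.IsHermitian) (i : Fin N) :
    hX.eigenvalues i ≤ lamN X := by
  have hne : Nonempty (Fin N) := ⟨i⟩
  have h1 : eigs X ((Tuple.sort hX.eigenvalues).symm i) = hX.eigenvalues i := by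
    rw [eigs, dif_pos hX]; simp
  rw [lamN, ← h1]
  exact le_ciSup (Set.finite_range _).bddAbove _

lemma lamN_attained {N : ℕ} (hN : 1 ≤ N) {X : Matrix (Fin N) (Fin N) ℝ} (hX : X.IsHermitian) :
    ∃ i, hX.eigenvalues i = lamN X := by
  have hne : Nonempty (Fin N) := Fin.pos_iff_nonempty.mp hN
  obtain ⟨i₀, hi₀⟩ := Finite.exists_max (eigs X)
  refine ⟨Tuple.sort hX.eigenvalues i₀, le_antisymm (eig_le_lamN hX _) ?_⟩
  have : eigs X i₀ = hX.eigenvalues (Tuple.sort hX.eigenvalues i₀) := by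
    rw [eigs, dif_pos hX]; simp
  rw [lamN, ← this]
  exact ciSup_le hi₀

lemma quadform_decomp {N : ℕ} {X : Matrix (Fin N) (Fin N) ℝ} (hX : X.IsHermitian)
    (v : Fin N → ℝ) :
    ∃ w : Fin N → ℝ, (X *ᵥ v ⬝ᵥ v = ∑ i, hX.eigenvalues i * (w i)^2) ∧ (v ⬝ᵥ v = ∑ i, (w i)^2) := by
  classical
  set U : Matrix (Fin N) (Fin N) ℝ := (hX.eigenvectorUnitary : Matrix (Fin N) (Fin N) ℝ) with hU
  set w : Fin N → ℝ := star U *ᵥ v with hw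
  have hUstar : (star U) * U = 1 := Unitary.coe_star_mul_self hX.eigenvectorUnitary
  have hUstar' : U * (star U) = 1 := Unitary.coe_mul_star_self hX.eigenvectorUnitary
  refine ⟨w, ?_, ?_⟩
  · conv_lhs => rw [hX.spectral_theorem]
    rw [RCLike.ofReal_real_eq_id]
    simp only [Function.id_comp, Unitary.conjStarAlgAut_apply]
    rw [← mulVec_mulVec, ← mulVec_mulVec, dotProduct_comm, dotProduct_mulVec, ← mulVec_transpose]
    have hstar : (star U : Matrix (Fin N) (Fin N) ℝ) = Uᵀ := by
      ext i j; simp [star_eq_conjTranspose, conjTranspose]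
    rw [← hstar, ← hw, dotProduct_comm]
    simp only [dotProduct, mulVec_diagonal]
    exact Finset.sum_congr rfl fun i _ => by ring
  · have hstar : (star U : Matrix (Fin N) (Fin N) ℝ) = Uᵀ := by
      ext i j; simp [star_eq_conjTranspose, conjTranspose]
    have h1 : w ⬝ᵥ w = v ⬝ᵥ v := by
      nth_rewrite 2 [hw]
      rw [hstar, dotProduct_mulVec, vecMul_transpose, hw, mulVec_mulVec, hUstar', one_mulVec]
    rw [← h1]
    simp [dotProduct, sq]

lemma rayleigh_le {N : ℕ} {X : Matrix (Fin N) (Fin N) ℝ} (hX : X.IsHermitian)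
    (v : Fin N → ℝ) : X *ᵥ v ⬝ᵥ v ≤ lamN X * (v ⬝ᵥ v) := by
  obtain ⟨w, h1, h2⟩ := quadform_decomp hX v
  rw [h1, h2, Finset.mul_sum]
  exact Finset.sum_le_sum fun i _ => mul_le_mul_of_nonneg_right (eig_le_lamN hX i) (sq_nonneg _)

lemma trace_eq_sum_eigs {N : ℕ} {X : Matrix (Fin N) (Fin N) ℝ} (hX : X.IsHermitian) :
    X.trace = ∑ i, hX.eigenvalues i := by
  classical
  conv_lhs => rw [hX.spectral_theorem]
  rw [RCLike.ofReal_real_eq_id]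
  simp only [Function.id_comp, Unitary.conjStarAlgAut_apply]
  rw [Matrix.trace_mul_comm, ← mul_assoc, Unitary.coe_star_mul_self hX.eigenvectorUnitary,
    one_mul, trace_diagonal]

lemma basis_dot {N : ℕ} {X : Matrix (Fin N) (Fin N) ℝ} (hX : X.IsHermitian) (i : Fin N) :
    (⇑(hX.eigenvectorBasis i) : Fin N → ℝ) ⬝ᵥ ⇑(hX.eigenvectorBasis i) = 1 := by
  have h := hX.eigenvectorBasis.orthonormal.1 i
  have h2 : (inner (𝕜 := ℝ) (hX.eigenvectorBasis i) (hX.eigenvectorBasis i) : ℝ) = 1 := by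
    rw [real_inner_self_eq_norm_sq, h]; norm_num
  rw [← h2, PiLp.inner_apply]
  simp [dotProduct, mul_comm]
  exact Finset.sum_congr rfl fun x _ => (sq _).symm

lemma eig_lower {N : ℕ} {Y M : Matrix (Fin N) (Fin N) ℝ} (hY : Y.IsHermitian)
    (hM : M.IsHermitian) (hPSD : (M - -Y).PosSemidef) (i : Fin N) : -lamN M ≤ hY.eigenvalues i := by
  set b : Fin N → ℝ := ⇑(hY.eigenvectorBasis i) with hb
  have hbb : b ⬝ᵥ b = 1 := basis_dot hY i
  have heig : hY.eigenvalues i = b ⬝ᵥ (Y *ᵥ b) := by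
    have := hY.eigenvalues_eq i
    simpa using this
  have hpos := hPSD.dotProduct_mulVec_nonneg b
  have hsub : (M - -Y) *ᵥ b = M *ᵥ b + Y *ᵥ b := by
    rw [sub_neg_eq_add, add_mulVec]
  rw [hsub] at hpos
  simp only [star_trivial, dotProduct_add] at hpos
  have hMb : b ⬝ᵥ (M *ᵥ b) ≤ lamN M := by
    have h := rayleigh_le hM b
    rw [hbb, mul_one] at h
    rw [dotProduct_comm]
    exact h
  linarith


/-- Supersolution bound for the p-Laplacian, case `1 < p < 2`:
if `−Y ≤ M` then `−F_p(ν, Y) ≥ |ν|^{p−2} ((p − 1) λ_N(Y) − (N − 1) λ_N(M))`. -/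
theorem pLaplace_classM_super_p_lt_two {N : ℕ} (hN : 1 ≤ N) (p : ℝ) (hp1 : 1 < p) (hp2 : p < 2)
    (ν : EuclideanSpace ℝ (Fin N)) (hν : ν ≠ 0)
    (Y M : Matrix (Fin N) (Fin N) ℝ) (hY : Y.IsHermitian) (hM : M.IsHermitian)
    (hYM : Loewner (-Y) M) :
    -Fp p ν Y ≥ ‖ν‖ ^ (p - 2) * ((p - 1) * lamN Y - ((N : ℝ) - 1) * lamN M) := by
  show -(-(‖ν‖ ^ (p - 2)) * (Y.trace +
      (p - 2) * (Y.mulVec ((WithLp.equiv 2 (Fin N → ℝ)) ν) ⬝ᵥ (WithLp.equiv 2 (Fin N → ℝ)) ν)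
        / ‖ν‖ ^ (2 : ℕ))) ≥ _
  replace hYM : (M - -Y).PosSemidef := hYM
  have hν' : 0 < ‖ν‖ := norm_pos_iff.mpr hν
  have hpow : (0:ℝ) < ‖ν‖ ^ (p - 2) := Real.rpow_pos_of_pos hν' _
  set v : Fin N → ℝ := (WithLp.equiv 2 (Fin N → ℝ)) ν with hv
  have hn2 : ‖ν‖ ^ (2:ℕ) = v ⬝ᵥ v := by
    rw [← real_inner_self_eq_norm_sq, PiLp.inner_apply]
    simp [dotProduct, hv, mul_comm]
    exact Finset.sum_congr rfl fun x _ => sq _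
  have hn2pos : (0:ℝ) < v ⬝ᵥ v := by
    rw [← hn2]; positivity
  have hray := rayleigh_le hY v
  have hne : Nonempty (Fin N) := Fin.pos_iff_nonempty.mp hN
  obtain ⟨i₀, hi₀⟩ := lamN_attained hN hY
  have hlow : ∀ i, -lamN M ≤ hY.eigenvalues i := eig_lower hY hM hYM
  have htr : lamN Y - ((N:ℝ) - 1) * lamN M ≤ Y.trace := by
    rw [trace_eq_sum_eigs hY, ← Finset.add_sum_erase _ _ (Finset.mem_univ i₀), hi₀]
    have hcard : ((Finset.univ.erase i₀).card : ℝ) = (N:ℝ) - 1 := by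
      rw [Finset.card_erase_of_mem (Finset.mem_univ i₀), Finset.card_univ, Fintype.card_fin,
        Nat.cast_sub hN, Nat.cast_one]
    have hsum : ((Finset.univ.erase i₀).card : ℝ) * (-lamN M)
        ≤ ∑ i ∈ Finset.univ.erase i₀, hY.eigenvalues i := by
      have := Finset.card_nsmul_le_sum (Finset.univ.erase i₀) hY.eigenvalues (-lamN M)
        (fun i _ => hlow i)
      simpa [nsmul_eq_mul] using this
    rw [hcard] at hsum
    nlinarith [hsum]
  have hdiv : (p - 2) * lamN Y ≤ (p - 2) * (Y *ᵥ v ⬝ᵥ v) / (v ⬝ᵥ v) := by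
    rw [mul_div_assoc]
    apply mul_le_mul_of_nonpos_left _ (by linarith : p - 2 ≤ 0)
    exact (div_le_iff₀ hn2pos).mpr hray
  rw [neg_mul, neg_neg, ge_iff_le, hn2]
  apply mul_le_mul_of_nonneg_left _ hpow.le
  have : Y.mulVec v = Y *ᵥ v := rfl
  rw [this]
  linarith
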